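/- arXiv:1707.06628 — 5 statements merged into one kernel-verified Lean document; each statement's English description precedes it below -/
import Mathlib

section
/- Let n ≥ 1, let θ be a real number, and define e_θ : F_2^n → ℂ by e_θ(x) = e^{iθ|x|}. Then for every x ∈ F_2^n, the weighted convolution of e_θ with its complex conjugate satisfies 2^{−n} · Σ_{y ∈ F_2^n} e_θ(y) · conj(e_θ(x+y)) = (cos θ)^{|x|}. -/
open Finset

private lemma hammingNorm_eq_sum' (n : ℕ) (x : Fin n → ZMod 2) :
    hammingNorm x = ∑ j, (if x j = 0 then 0 else 1) := by
  rw [hammingNorm, Finset.card_filter]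
  exact Finset.sum_congr rfl fun j _ => by by_cases h : x j = 0 <;> simp [h]

/-- For `n ≥ 1`, `θ : ℝ`, and `e_θ(x) = e^{iθ|x|}` on `F_2^n`,
the weighted convolution of `e_θ` with its conjugate satisfies
`2^{-n} ∑_y e_θ(y) conj(e_θ(x+y)) = (cos θ)^{|x|}` for every `x`. -/
theorem weighted_convolution_exp_eq_cos_pow
    (n : ℕ) (hn : 1 ≤ n) (θ : ℝ) (eθ : (Fin n → ZMod 2) → ℂ)
    (heθ : ∀ x, eθ x = Complex.exp (Complex.I * (θ : ℂ) * (hammingNorm x : ℂ))) :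
    ∀ x : Fin n → ZMod 2,
      (∑ y : Fin n → ZMod 2, eθ y * (starRingEnd ℂ) (eθ (x + y))) / 2 ^ n
        = ((Real.cos θ : ℂ)) ^ (hammingNorm x) := by
  intro x
  set w : ZMod 2 → ℂ := fun b => if b = 0 then 0 else 1 with hw
  have key : ∀ z : Fin n → ZMod 2,
      eθ z = ∏ j, Complex.exp (Complex.I * θ * w (z j)) := by
    intro z
    rw [heθ, hammingNorm_eq_sum']
    push_cast
    rw [Finset.mul_sum, Complex.exp_sum]
  have conjexp : ∀ b : ZMod 2, (starRingEnd ℂ) (Complex.exp (Complex.I * θ * w b))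
      = Complex.exp (-(Complex.I * θ * w b)) := by
    intro b
    rw [← Complex.exp_conj]
    congr 1
    simp only [hw]
    split_ifs <;> simp
  have step : (∑ y : Fin n → ZMod 2, eθ y * (starRingEnd ℂ) (eθ (x + y)))
      = ∏ j, ∑ b : ZMod 2, Complex.exp (Complex.I * θ * w b)
          * Complex.exp (-(Complex.I * θ * w (x j + b))) := by
    rw [Fintype.prod_sum fun j b => Complex.exp (Complex.I * θ * w b)
          * Complex.exp (-(Complex.I * θ * w (x j + b)))]
    refine Finset.sum_congr rfl fun y _ => ?_
    rw [key, key, map_prod, ← Finset.prod_mul_distrib]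
    refine Finset.prod_congr rfl fun j _ => ?_
    rw [conjexp]
    rfl
  have factor : ∀ j, (∑ b : ZMod 2, Complex.exp (Complex.I * θ * w b)
          * Complex.exp (-(Complex.I * θ * w (x j + b))))
      = 2 * (Real.cos θ : ℂ) ^ (if x j = 0 then 0 else 1) := by
    intro j
    have expand : (∑ b : ZMod 2, Complex.exp (Complex.I * θ * w b)
          * Complex.exp (-(Complex.I * θ * w (x j + b))))
        = Complex.exp (Complex.I * θ * w 0) * Complex.exp (-(Complex.I * θ * w (x j + 0)))
          + Complex.exp (Complex.I * θ * w 1) * Complex.exp (-(Complex.I * θ * w (x j + 1))) :=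
      Fin.sum_univ_two _
    rw [expand]
    by_cases h : x j = 0
    · simp [h, hw, ← Complex.exp_add]
      norm_num
    · have h1 : x j = 1 := by
        have : ∀ b : ZMod 2, b ≠ 0 → b = 1 := by decide
        exact this _ h
      have e0 : x j + 0 = 1 := by rw [h1]; decide
      have e1 : x j + 1 = 0 := by rw [h1]; decide
      rw [e0, e1]
      simp only [hw, if_pos rfl, if_neg one_ne_zero, h1, mul_zero, mul_one,
        Complex.exp_zero, one_mul, mul_one, neg_zero, pow_one]
      rw [Complex.ofReal_cos, Complex.cos]
      ring_nf
  rw [step]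
  have prodeq : (∏ j, (2 * (Real.cos θ : ℂ) ^ (if x j = 0 then 0 else 1)))
      = 2 ^ n * (Real.cos θ : ℂ) ^ (hammingNorm x) := by
    rw [Finset.prod_mul_distrib, Finset.prod_pow_eq_pow_sum, Finset.prod_const,
      Finset.card_univ, Fintype.card_fin, hammingNorm_eq_sum']
  rw [Finset.prod_congr rfl fun j _ => factor j, prodeq]
  field_simp
end

section
/- Let n ≥ 1 and let Q ⊊ F_2^n be a proper F_2-linear subspace. Then for every real θ, E_{u∼U_n} | E_{x∼μ_{Q+u}} e^{iθ|x|} − E_{x∼U_n} e^{iθ|x|} |^2 = E_{y∼μ_Q} (cos θ)^{|y|} − ((cos θ + 1)/2)^n, where Q+u = {q+u : q ∈ Q} is the coset of Q by u. -/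
open Finset

private lemma prodIf {n : ℕ} (c : ℂ) (z : Fin n → ZMod 2) :
    ∏ i, (if z i = 0 then (1:ℂ) else c) = c ^ hammingNorm z := by
  rw [hammingNorm,
    ← Finset.prod_filter_mul_prod_filter_not Finset.univ (fun i => z i ≠ 0)
      (fun i => if z i = 0 then (1:ℂ) else c)]
  have h1 : ∏ i ∈ Finset.univ.filter (fun i => z i ≠ 0),
      (if z i = 0 then (1:ℂ) else c) = c ^ #{i | z i ≠ 0} := by
    rw [show #{i | z i ≠ 0} = (Finset.univ.filter (fun i => z i ≠ 0)).card from rfl,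
      ← Finset.prod_const]
    exact Finset.prod_congr rfl (by intro i hi; simp only [Finset.mem_filter] at hi; simp [hi.2])
  have h2 : ∏ i ∈ Finset.univ.filter (fun i => ¬ z i ≠ 0),
      (if z i = 0 then (1:ℂ) else c) = 1 := by
    rw [Finset.prod_eq_one]
    intro i hi; simp only [Finset.mem_filter, not_not] at hi; simp [hi.2]
  rw [h1, h2, mul_one]

private lemma expA {n : ℕ} (θ : ℝ) (x : Fin n → ZMod 2) :
    Complex.exp (Complex.I * θ * (hammingNorm x : ℂ))
      = ∏ i, (if x i = 0 then (1:ℂ) else Complex.exp (Complex.I * θ)) := by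
  rw [prodIf, mul_comm, Complex.exp_nat_mul]

private lemma sum_zmod2 (f : ZMod 2 → ℂ) : ∑ a : ZMod 2, f a = f 0 + f 1 := by
  have : (Finset.univ : Finset (ZMod 2)) = {0, 1} := by decide
  rw [this]; simp

private lemma coordSum (θ : ℝ) (b c : ZMod 2) :
    ∑ a : ZMod 2, (if b + a = 0 then (1:ℂ) else Complex.exp (Complex.I * θ))
        * (starRingEnd ℂ) (if c + a = 0 then (1:ℂ) else Complex.exp (Complex.I * θ))
      = 2 * (if b + c = 0 then (1:ℂ) else (Real.cos θ : ℂ)) := by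
  have hconj : (starRingEnd ℂ) (Complex.exp (Complex.I * θ)) = Complex.exp (-(Complex.I * θ)) := by
    rw [← Complex.exp_conj]; congr 1; simp
  have hmul : Complex.exp (Complex.I * θ) * Complex.exp (-(Complex.I * θ)) = 1 := by
    rw [← Complex.exp_add]; simp
  have hcos : Complex.exp (Complex.I * θ) + Complex.exp (-(Complex.I * θ))
      = 2 * (Real.cos θ : ℂ) := by
    rw [Complex.ofReal_cos, Complex.two_cos, mul_comm Complex.I (θ:ℂ)]
    congr 2
    ring
  rw [sum_zmod2]
  rcases (by decide : ∀ a : ZMod 2, a = 0 ∨ a = 1) b with rfl | rfl <;>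
    rcases (by decide : ∀ a : ZMod 2, a = 0 ∨ a = 1) c with rfl | rfl <;>
    simp [-Complex.ofReal_cos, hconj, show (1+1:ZMod 2) = 0 by decide,
      show (1:ZMod 2) ≠ 0 by decide] <;>
    first
      | linear_combination hmul
      | linear_combination hcos

private lemma lemB {n : ℕ} (θ : ℝ) (x y : Fin n → ZMod 2) :
    ∑ u : Fin n → ZMod 2,
        Complex.exp (Complex.I * θ * (hammingNorm (x + u) : ℂ))
          * (starRingEnd ℂ) (Complex.exp (Complex.I * θ * (hammingNorm (y + u) : ℂ)))
      = 2 ^ n * ((Real.cos θ : ℂ)) ^ hammingNorm (x + y) := by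
  have key : ∀ u : Fin n → ZMod 2,
      Complex.exp (Complex.I * θ * (hammingNorm (x + u) : ℂ))
        * (starRingEnd ℂ) (Complex.exp (Complex.I * θ * (hammingNorm (y + u) : ℂ)))
      = ∏ i, ((if x i + u i = 0 then (1:ℂ) else Complex.exp (Complex.I * θ))
          * (starRingEnd ℂ) (if y i + u i = 0 then (1:ℂ) else Complex.exp (Complex.I * θ))) := by
    intro u
    rw [expA, expA, map_prod, ← Finset.prod_mul_distrib]
    rfl
  simp only [key]
  have huniv : (Finset.univ : Finset (Fin n → ZMod 2)) = Fintype.piFinset fun _ => univ :=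
    (Fintype.piFinset_univ).symm
  rw [huniv, ← Finset.prod_univ_sum (fun _ : Fin n => (univ : Finset (ZMod 2)))
    (fun i a => (if x i + a = 0 then (1:ℂ) else Complex.exp (Complex.I * θ))
      * (starRingEnd ℂ) (if y i + a = 0 then (1:ℂ) else Complex.exp (Complex.I * θ)))]
  have h2 : ∀ i : Fin n,
      (∑ a : ZMod 2, (if x i + a = 0 then (1:ℂ) else Complex.exp (Complex.I * θ))
        * (starRingEnd ℂ) (if y i + a = 0 then (1:ℂ) else Complex.exp (Complex.I * θ)))
      = 2 * (if (x + y) i = 0 then (1:ℂ) else (Real.cos θ : ℂ)) := fun i => coordSum θ (x i) (y i)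
  rw [Finset.prod_congr rfl (fun i _ => h2 i), Finset.prod_mul_distrib, prodIf,
    Finset.prod_const, Finset.card_univ, Fintype.card_fin]

private lemma lemC {n : ℕ} (x : Fin n → ZMod 2) (f : (Fin n → ZMod 2) → ℂ) :
    ∑ u, f (x + u) = ∑ v, f v :=
  Fintype.sum_equiv (Equiv.addLeft x) _ _ (fun _ => rfl)

private lemma lemMval {n : ℕ} (θ : ℝ) :
    (∑ x : Fin n → ZMod 2, Complex.exp (Complex.I * θ * (hammingNorm x : ℂ)))
      = (1 + Complex.exp (Complex.I * θ)) ^ n := by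
  simp only [expA]
  have huniv : (Finset.univ : Finset (Fin n → ZMod 2)) = Fintype.piFinset fun _ => univ :=
    (Fintype.piFinset_univ).symm
  rw [huniv, ← Finset.prod_univ_sum (fun _ : Fin n => (univ : Finset (ZMod 2)))
    (fun _ a => (if a = 0 then (1:ℂ) else Complex.exp (Complex.I * θ)))]
  have : ∀ i : Fin n, (∑ a : ZMod 2, if a = 0 then (1:ℂ) else Complex.exp (Complex.I * θ))
      = 1 + Complex.exp (Complex.I * θ) := by
    intro i; rw [sum_zmod2]; simp
  rw [Finset.prod_congr rfl (fun i _ => this i), Finset.prod_const, Finset.card_univ,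
    Fintype.card_fin]

private lemma lemM {n : ℕ} (θ : ℝ) :
    (∑ x : Fin n → ZMod 2, Complex.exp (Complex.I * θ * (hammingNorm x : ℂ)))
      * (starRingEnd ℂ) (∑ x : Fin n → ZMod 2, Complex.exp (Complex.I * θ * (hammingNorm x : ℂ)))
      = (2 + 2 * (Real.cos θ : ℂ)) ^ n := by
  have hconj : (starRingEnd ℂ) (Complex.exp (Complex.I * θ)) = Complex.exp (-(Complex.I * θ)) := by
    rw [← Complex.exp_conj]; congr 1; simp
  have hmul : Complex.exp (Complex.I * θ) * Complex.exp (-(Complex.I * θ)) = 1 := by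
    rw [← Complex.exp_add]; simp
  have hcos : Complex.exp (Complex.I * θ) + Complex.exp (-(Complex.I * θ))
      = 2 * (Real.cos θ : ℂ) := by
    rw [Complex.ofReal_cos, Complex.two_cos, mul_comm Complex.I (θ:ℂ)]
    congr 2
    ring
  rw [lemMval, map_pow, map_add, map_one, hconj, ← mul_pow]
  congr 1
  linear_combination hmul + hcos

/-- For a proper linear code `Q ⊊ F_2^n` and any real `θ`,
`E_{u∼U_n} |E_{x∼μ_{Q+u}} e^{iθ|x|} − E_{x∼U_n} e^{iθ|x|}|² =
 E_{y∼μ_Q} (cos θ)^{|y|} − ((cos θ + 1)/2)^n`. -/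
theorem expectation_coset_exp_dist_sq_eq
    (n : ℕ) (hn : 1 ≤ n) (Q : Submodule (ZMod 2) (Fin n → ZMod 2))
    [DecidablePred (· ∈ Q)] (hQ : Q ≠ ⊤) (θ : ℝ) :
    (∑ u : Fin n → ZMod 2,
        (‖
          ((∑ x ∈ Finset.univ.filter (· ∈ Q),
              Complex.exp (Complex.I * (θ : ℂ) * (hammingNorm (x + u) : ℂ)))
              / ((Finset.univ.filter (· ∈ Q)).card : ℂ)
            - (∑ x : Fin n → ZMod 2,
                Complex.exp (Complex.I * (θ : ℂ) * (hammingNorm x : ℂ))) / 2 ^ n)‖) ^ 2)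
        / 2 ^ n
      = (∑ y ∈ Finset.univ.filter (· ∈ Q), Real.cos θ ^ (hammingNorm y))
          / ((Finset.univ.filter (· ∈ Q)).card : ℝ)
        - ((Real.cos θ + 1) / 2) ^ n := by
  classical
  set QS : Finset (Fin n → ZMod 2) := Finset.univ.filter (· ∈ Q) with hQS
  set q : ℕ := QS.card with hq
  set E : (Fin n → ZMod 2) → ℂ := fun v => Complex.exp (Complex.I * θ * (hammingNorm v : ℂ))
    with hE
  set S : (Fin n → ZMod 2) → ℂ := fun u => ∑ x ∈ QS, E (x + u) with hS
  set M : ℂ := ∑ x : Fin n → ZMod 2, E x with hM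
  have hmemQS : ∀ v, v ∈ QS ↔ v ∈ Q := by intro v; simp [hQS]
  have hqpos : 0 < q := Finset.card_pos.2 ⟨0, (hmemQS 0).2 Q.zero_mem⟩
  have hqC : (q : ℂ) ≠ 0 := Nat.cast_ne_zero.2 hqpos.ne'
  have hqR : (q : ℝ) ≠ 0 := Nat.cast_ne_zero.2 hqpos.ne'
  have haddself : ∀ v : Fin n → ZMod 2, v + v = 0 := by
    intro v; funext i
    exact (by decide : ∀ a : ZMod 2, a + a = 0) (v i)
  set C : ℂ := ∑ y ∈ QS, ((Real.cos θ : ℂ)) ^ hammingNorm y with hC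
  have h2 : ∑ u : Fin n → ZMod 2, S u = (q : ℂ) * M := by
    rw [Finset.sum_comm]
    rw [Finset.sum_congr rfl (fun x _ => lemC x E)]
    rw [Finset.sum_const, nsmul_eq_mul]
  have h3 : ∑ u : Fin n → ZMod 2, (starRingEnd ℂ) (S u) = (q : ℂ) * (starRingEnd ℂ) M := by
    rw [← map_sum, h2, map_mul, Complex.conj_natCast]
  have h1 : ∑ u : Fin n → ZMod 2, S u * (starRingEnd ℂ) (S u) = 2 ^ n * (q : ℂ) * C := by
    have expand : ∀ u, S u * (starRingEnd ℂ) (S u)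
        = ∑ x ∈ QS, ∑ y ∈ QS, E (x + u) * (starRingEnd ℂ) (E (y + u)) := by
      intro u
      rw [hS]
      simp only [map_sum]
      rw [Finset.sum_mul_sum]
    simp only [expand]
    rw [Finset.sum_comm]
    have inner : ∀ x ∈ QS, (∑ u : Fin n → ZMod 2, ∑ y ∈ QS,
        E (x + u) * (starRingEnd ℂ) (E (y + u))) = 2 ^ n * C := by
      intro x hx
      rw [Finset.sum_comm]
      have hper : ∀ y ∈ QS, (∑ u : Fin n → ZMod 2, E (x + u) * (starRingEnd ℂ) (E (y + u)))
          = 2 ^ n * ((Real.cos θ : ℂ)) ^ hammingNorm (x + y) := fun y _ => lemB θ x y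
      rw [Finset.sum_congr rfl hper, ← Finset.mul_sum]
      congr 1
      apply Finset.sum_nbij' (fun y => x + y) (fun z => x + z)
      · intro y hy
        exact (hmemQS _).2 (Q.add_mem ((hmemQS x).1 hx) ((hmemQS y).1 hy))
      · intro z hz
        exact (hmemQS _).2 (Q.add_mem ((hmemQS x).1 hx) ((hmemQS z).1 hz))
      · intro y _; rw [← add_assoc, haddself, zero_add]
      · intro z _; rw [← add_assoc, haddself, zero_add]
      · intro y _; rfl
    rw [Finset.sum_congr rfl inner, Finset.sum_const, nsmul_eq_mul, hq]
    ring
  have h4 : M * (starRingEnd ℂ) M = (2 + 2 * (Real.cos θ : ℂ)) ^ n := lemM θ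
  have hcard : (Finset.univ : Finset (Fin n → ZMod 2)).card = 2 ^ n := by
    simp [Finset.card_univ]
  have Tval : ∑ u : Fin n → ZMod 2,
      (S u / q - M / 2 ^ n) * (starRingEnd ℂ) (S u / q - M / 2 ^ n)
      = 2 ^ n * (C / q - ((2 + 2 * (Real.cos θ : ℂ)) / 4) ^ n) := by
    have expand2 : ∀ u : Fin n → ZMod 2,
        (S u / q - M / 2 ^ n) * (starRingEnd ℂ) (S u / q - M / 2 ^ n)
        = (S u * (starRingEnd ℂ) (S u)) / ((q:ℂ) * q)
          - (S u * (starRingEnd ℂ) M) / ((q:ℂ) * 2 ^ n)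
          - ((starRingEnd ℂ) (S u) * M) / ((q:ℂ) * 2 ^ n)
          + (M * (starRingEnd ℂ) M) / ((2:ℂ) ^ n * 2 ^ n) := by
      intro u
      simp only [map_sub, map_div₀, Complex.conj_natCast, map_pow, map_ofNat]
      ring
    rw [Finset.sum_congr rfl (fun u _ => expand2 u)]
    rw [Finset.sum_add_distrib, Finset.sum_sub_distrib, Finset.sum_sub_distrib]
    rw [← Finset.sum_div, ← Finset.sum_div, ← Finset.sum_div, h1]
    rw [← Finset.sum_mul, h2, ← Finset.sum_mul, h3]
    rw [Finset.sum_const, hcard, nsmul_eq_mul]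
    simp only [Nat.cast_pow, Nat.cast_ofNat]
    have hf : (((2:ℂ) + 2 * (Real.cos θ : ℂ)) / 4) ^ n
        = M * (starRingEnd ℂ) M / ((2:ℂ) ^ n * 2 ^ n) := by
      rw [h4, div_pow, ← mul_pow]
      norm_num
    rw [hf]
    generalize (starRingEnd ℂ) M = N
    generalize hA : (2:ℂ) ^ n = A
    have hA0 : A ≠ 0 := hA ▸ pow_ne_zero _ two_ne_zero
    have e1 : A * ↑q * C / (↑q * ↑q) = A * C / ↑q := by
      rw [show A * ↑q * C = ↑q * (A * C) by ring, mul_div_mul_left _ _ hqC]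
    have e2 : ↑q * M * N / (↑q * A) = M * N / A := by
      rw [show (↑q : ℂ) * M * N = ↑q * (M * N) by ring, mul_div_mul_left _ _ hqC]
    have e3 : ↑q * N * M / (↑q * A) = M * N / A := by
      rw [show (↑q : ℂ) * N * M = ↑q * (M * N) by ring, mul_div_mul_left _ _ hqC]
    have e4 : A * (M * N / (A * A)) = M * N / A := by
      rw [mul_div_assoc', mul_div_mul_left _ _ hA0]
    rw [e1, e2, e3, e4, mul_sub, e4, mul_div_assoc]
    ring
  have habs : ∀ z : ℂ, ‖z‖ ^ 2 = (z * (starRingEnd ℂ) z).re := by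
    intro z
    rw [Complex.mul_conj, Complex.sq_norm, Complex.ofReal_re]
  have hbase : ((2:ℂ) + 2 * (Real.cos θ : ℂ)) / 4 = ((Real.cos θ : ℂ) + 1) / 2 := by ring
  calc (∑ u : Fin n → ZMod 2, ‖S u / q - M / 2 ^ n‖ ^ 2) / 2 ^ n
      = (∑ u : Fin n → ZMod 2,
          ((S u / q - M / 2 ^ n) * (starRingEnd ℂ) (S u / q - M / 2 ^ n)).re) / 2 ^ n := by
        rw [Finset.sum_congr rfl (fun u _ => habs _)]
    _ = ((2:ℂ) ^ n * (C / q - ((2 + 2 * (Real.cos θ : ℂ)) / 4) ^ n)).re / 2 ^ n := by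
        rw [← Complex.re_sum, Tval]
    _ = ((∑ y ∈ QS, Real.cos θ ^ hammingNorm y) / q - ((Real.cos θ + 1) / 2) ^ n) := by
        have hcast : ((2:ℂ) ^ n * (C / q - ((2 + 2 * (Real.cos θ : ℂ)) / 4) ^ n))
            = (((2:ℝ) ^ n * ((∑ y ∈ QS, Real.cos θ ^ hammingNorm y) / q
                - ((Real.cos θ + 1) / 2) ^ n) : ℝ) : ℂ) := by
          rw [hbase, hC]
          push_cast
          ring
        rw [hcast, Complex.ofReal_re,
          mul_div_cancel_left₀ _ (pow_ne_zero n (two_ne_zero (α := ℝ)))]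
end

section
/- For each ε > 0 there exist δ > 0 and N such that for every integer n ≥ N and every real number Δ with 0 < Δ ≤ δn, the normalized Hamming ball volume satisfies v_n(n/2 − Δ) ≥ e^{−(2+ε)·(Δ + √(2n) + 2)^2 / n}. -/
open Finset

set_option maxHeartbeats 400000


lemma cb_sq (m : ℕ) (hm : 1 ≤ m) : 16 ^ m ≤ (Nat.centralBinom m) ^ 2 * (4 * m) := by
  induction m with
  | zero => omega
  | succ m ih =>
    rcases Nat.eq_or_lt_of_le hm with h | h
    · rw [← h]; decide
    · have hm1 : 1 ≤ m := by omega
      have ih := ih hm1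
      have key : (m + 1) * Nat.centralBinom (m + 1) = 2 * (2 * m + 1) * Nat.centralBinom m :=
        Nat.succ_mul_centralBinom_succ m
      refine Nat.le_of_mul_le_mul_left ?_ (show 0 < (m+1)^2 by positivity)
      calc (m+1)^2 * (16 ^ (m+1)) = 16 * (m+1)^2 * 16 ^ m := by ring
        _ ≤ 16 * (m+1)^2 * ((Nat.centralBinom m)^2 * (4 * m)) := by
            exact Nat.mul_le_mul_left _ ih
        _ ≤ (2 * (2*m+1) * Nat.centralBinom m)^2 * (4*(m+1)) := by
            nlinarith [sq_nonneg (Nat.centralBinom m)]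
        _ = ((m+1) * Nat.centralBinom (m+1))^2 * (4*(m+1)) := by rw [key]
        _ = (m+1)^2 * ((Nat.centralBinom (m+1))^2 * (4 * (m+1))) := by ring

lemma middle_sq (n : ℕ) (hn : 1 ≤ n) : 4 ^ n ≤ (n.choose (n/2)) ^ 2 * (4 * n) := by
  rcases Nat.even_or_odd n with ⟨m, hm⟩ | ⟨m, hm⟩
  · subst hm
    have hm1 : 1 ≤ m := by omega
    have h := cb_sq m hm1
    have h2 : (m + m) / 2 = m := by omega
    rw [h2]
    rw [Nat.centralBinom, two_mul] at h
    calc 4 ^ (m + m) = 16 ^ m := by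
          rw [show m + m = 2 * m by ring, pow_mul]; norm_num
      _ ≤ ((m+m).choose m)^2 * (4 * m) := h
      _ ≤ ((m+m).choose m)^2 * (4 * (m+m)) := Nat.mul_le_mul_left _ (by omega)
  · subst hm
    have h2 : (2 * m + 1) / 2 = m := by omega
    rw [h2]
    have key : 2 * ((2 * m + 1).choose m) = Nat.centralBinom (m + 1) := by
      rw [Nat.centralBinom]
      have h1 : 2 * (m + 1) = (2 * m + 1) + 1 := by ring
      rw [h1, Nat.choose_succ_succ]
      have h3 := Nat.choose_symm (show m + 1 ≤ 2 * m + 1 by omega)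
      rw [show 2 * m + 1 - (m + 1) = m by omega] at h3
      simp only [Nat.succ_eq_add_one]
      omega
    have h := cb_sq (m + 1) (by omega)
    rw [← key] at h
    set C := (2 * m + 1).choose m with hC
    refine Nat.le_of_mul_le_mul_left ?_ (show 0 < 4 by norm_num)
    calc 4 * 4 ^ (2 * m + 1) = 16 ^ (m + 1) := by
          rw [show (16:ℕ) = 4 * 4 by norm_num, mul_pow, ← pow_add, ← pow_succ']
          ring_nf
      _ ≤ (2 * C)^2 * (4 * (m + 1)) := h
      _ = 4 * (C^2 * (4 * (m+1))) := by ring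
      _ ≤ 4 * (C^2 * (4 * (2 * m + 1))) := by
          exact Nat.mul_le_mul_left _ (Nat.mul_le_mul_left _ (by omega))


lemma choose_mono_left {n j w : ℕ} (hjw : j ≤ w) (hw : w ≤ n / 2) :
    n.choose j ≤ n.choose w := by
  induction w with
  | zero => simp_all
  | succ w ih =>
    rcases Nat.eq_or_lt_of_le hjw with h | h
    · rw [h]
    · exact le_trans (ih (by omega) (by omega))
        (Nat.choose_le_succ_of_lt_half_left (by omega))

lemma ratio_bound (n : ℕ) : ∀ t j : ℕ, 1 ≤ j → n ≤ 2 * (j + t) + 1 →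
    (n.choose (j + t) : ℝ) ≤ n.choose j * Real.exp ((t ^ 2 + 2 * t) / j) := by
  intro t
  induction t with
  | zero =>
    intro j hj _
    simp
  | succ t ih =>
    intro j hj hn
    have hj0 : (0:ℝ) < j := by exact_mod_cast hj
    have step : (n.choose (j + 1) : ℝ) ≤ n.choose j * (1 + (2 * t + 3) / j) := by
      have hnat : n.choose (j + 1) * j ≤ n.choose j * (j + (2 * t + 3)) := by
        refine Nat.le_of_mul_le_mul_right ?_ (show 0 < j + 1 by omega)
        have hkey : n.choose (j+1) * (j+1) = n.choose j * (n - j) :=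
          Nat.choose_succ_right_eq n j
        calc n.choose (j+1) * j * (j+1) = n.choose (j+1) * (j+1) * j := by ring
          _ = n.choose j * (n - j) * j := by rw [hkey]
          _ ≤ n.choose j * (j + (2*t+3)) * (j+1) := by
              have h1 : n - j ≤ j + (2*t+3) := by omega
              calc n.choose j * (n - j) * j ≤ n.choose j * (j + (2*t+3)) * j :=
                    Nat.mul_le_mul_right _ (Nat.mul_le_mul_left _ h1)
                _ ≤ n.choose j * (j + (2*t+3)) * (j+1) :=
                    Nat.mul_le_mul_left _ (by omega)
      have hc := (Nat.cast_le (α := ℝ)).2 hnat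
      push_cast at hc
      rw [← sub_nonneg]
      have heq : (n.choose j : ℝ) * (1 + (2 * t + 3) / j) - n.choose (j+1)
          = ((n.choose j : ℝ) * (j + (2 * t + 3)) - n.choose (j+1) * j) / j := by
        field_simp
      rw [heq]
      exact div_nonneg (by linarith) hj0.le
    have ihj : (n.choose (j + 1 + t) : ℝ) ≤ n.choose (j+1) * Real.exp ((t^2 + 2*t) / (j+1)) := by
      have := ih (j+1) (by omega) (by omega)
      push_cast at this
      exact this
    have hmono : Real.exp (((t:ℝ)^2 + 2*t) / (j+1)) ≤ Real.exp (((t:ℝ)^2 + 2*t) / j) := by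
      apply Real.exp_le_exp.2
      apply div_le_div_of_nonneg_left (by positivity) hj0
      exact_mod_cast Nat.le_succ j
    have hone : (1 : ℝ) + (2*t+3)/j ≤ Real.exp ((2*t+3)/j) := by
      have := Real.add_one_le_exp ((2*(t:ℝ)+3)/j)
      linarith
    have hcpos : (0:ℝ) ≤ n.choose j := Nat.cast_nonneg _
    have hcpos1 : (0:ℝ) ≤ n.choose (j+1) := Nat.cast_nonneg _
    calc (n.choose (j + (t+1)) : ℝ) = n.choose (j + 1 + t) := by ring_nf
      _ ≤ n.choose (j+1) * Real.exp ((t^2 + 2*t) / (j+1)) := ihj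
      _ ≤ n.choose (j+1) * Real.exp (((t:ℝ)^2 + 2*t) / j) := by
          exact mul_le_mul_of_nonneg_left hmono hcpos1
      _ ≤ (n.choose j * (1 + (2*t+3)/j)) * Real.exp (((t:ℝ)^2 + 2*t) / j) := by
          exact mul_le_mul_of_nonneg_right step (Real.exp_nonneg _)
      _ ≤ (n.choose j * Real.exp ((2*t+3)/j)) * Real.exp (((t:ℝ)^2 + 2*t) / j) := by
          refine mul_le_mul_of_nonneg_right (mul_le_mul_of_nonneg_left hone hcpos) (Real.exp_nonneg _)
      _ = n.choose j * Real.exp ((((t:ℝ)+1)^2 + 2*((t:ℝ)+1)) / j) := by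
          rw [mul_assoc, ← Real.exp_add]
          congr 1
          field_simp
          ring
      _ = n.choose j * Real.exp (((((t:ℕ):ℝ)+1)^2 + 2*(((t:ℕ):ℝ)+1)) / j) := by norm_num
      _ = n.choose j * Real.exp ((((t+1:ℕ):ℝ))^2 / j + 2*(((t+1:ℕ):ℝ)) / j) := by push_cast; ring_nf
      _ = n.choose j * Real.exp (((t+1:ℕ)^2 + 2*(t+1:ℕ)) / j) := by push_cast; ring_nf


lemma count_ball (n k : ℕ) :
    ∑ w ∈ Finset.range (k+1), n.choose w
      ≤ Nat.card {x : Fin n → ZMod 2 // hammingNorm x ≤ k} := by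
  rw [Nat.card_eq_fintype_card, Fintype.card_subtype]
  set D := (Finset.range (k+1)).biUnion
    (fun w => Finset.powersetCard w (Finset.univ : Finset (Fin n))) with hD
  have hnorm : ∀ S : Finset (Fin n),
      hammingNorm (fun i => if i ∈ S then (1 : ZMod 2) else 0) = S.card := by
    intro S
    unfold hammingNorm
    congr 1
    ext i
    by_cases h : i ∈ S <;> simp [h]
  have hcardD : D.card = ∑ w ∈ Finset.range (k+1), n.choose w := by
    rw [hD, Finset.card_biUnion]
    · refine Finset.sum_congr rfl fun w _ => ?_
      rw [Finset.card_powersetCard, Finset.card_univ, Fintype.card_fin]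
    · intro a ha b hb hab
      simp only [Finset.disjoint_left]
      intro S hSa hSb
      rw [Finset.mem_powersetCard_univ] at hSa hSb
      omega
  rw [← hcardD]
  refine Finset.card_le_card_of_injOn
    (fun S i => if i ∈ S then (1 : ZMod 2) else 0) ?_ ?_
  · intro S hS
    simp only [Finset.mem_coe, hD, Finset.mem_biUnion, Finset.mem_range, Finset.mem_powersetCard_univ] at hS
    obtain ⟨w, hw, hSw⟩ := hS
    simp only [Finset.mem_coe, Finset.mem_filter, Finset.mem_univ, true_and]
    rw [hnorm, hSw]
    omega
  · intro S _ S' _ h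
    ext i
    have := congr_fun h i
    by_cases h1 : i ∈ S <;> by_cases h2 : i ∈ S' <;> simp_all

/-- For each `ε > 0` there are `δ > 0` and `N` such that for every
integer `n ≥ N` and real `Δ` with `0 < Δ ≤ δn`, the normalized Hamming ball volume
satisfies `v_n(n/2 − Δ) ≥ e^{−(2+ε)(Δ + √(2n) + 2)²/n}`. -/
theorem hamming_ball_volume_lower_bound :
    ∀ ε > (0 : ℝ), ∃ δ > (0 : ℝ), ∃ N : ℕ, ∀ n : ℕ, N ≤ n → ∀ Δ : ℝ, 0 < Δ → Δ ≤ δ * n →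
      Real.exp (-(2 + ε) * (Δ + Real.sqrt (2 * n) + 2) ^ 2 / n)
        ≤ (Nat.card {x : Fin n → ZMod 2 // (hammingNorm x : ℝ) ≤ (n : ℝ) / 2 - Δ} : ℝ)
            / 2 ^ n := by
  intro ε hε
  set ε' : ℝ := min ε 1 with hε'def
  clear_value ε'
  have hε'pos : 0 < ε' := hε'def ▸ lt_min hε one_pos
  have hε'1 : ε' ≤ 1 := hε'def ▸ min_le_right ε 1
  have hε'ε : ε' ≤ ε := hε'def ▸ min_le_left ε 1
  refine ⟨ε' / 100, by positivity, ⌈(1000000 / ε') ^ 2⌉₊, ?_⟩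
  intro n hn Δ hΔ hΔδ
  -- basic real quantities
  set rn : ℝ := (n : ℝ) with hrn_def
  have hrn : (1000000 / ε') ^ 2 ≤ rn := le_trans (Nat.le_ceil _) (Nat.cast_le.2 hn)
  clear_value rn

  set sq : ℝ := Real.sqrt rn with hsq_def
  have hrn0 : (0:ℝ) ≤ rn := le_trans (by positivity) hrn
  have hsqsq : sq * sq = rn := Real.mul_self_sqrt hrn0
  have hsq : 1000000 / ε' ≤ sq := by
    have h := Real.sqrt_le_sqrt hrn
    rwa [Real.sqrt_sq (by positivity)] at h
  have hsq6 : 1000000 ≤ sq := by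
    refine le_trans ?_ hsq
    calc (1000000:ℝ) = 1000000 / 1 := by norm_num
      _ ≤ 1000000 / ε' := by
          apply div_le_div_of_nonneg_left (by norm_num) hε'pos hε'1
  have hsqpos : (0:ℝ) < sq := by linarith
  have h10 : 1000000 ≤ sq * ε' := by
    rw [div_le_iff₀ hε'pos] at hsq; linarith
  have hsq_small : sq * 1000000 ≤ rn := by
    have h := mul_le_mul_of_nonneg_left hsq6 hsqpos.le
    linarith [hsqsq]
  have hrn12 : (1000000:ℝ) * 1000000 ≤ rn := by
    have h := mul_le_mul_of_nonneg_right hsq6 (show (0:ℝ) ≤ 1000000 by norm_num)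
    linarith
  have hrnpos : (0:ℝ) < rn := by linarith
  have hsq_eps : sq * 1000000 ≤ rn * ε' := by
    have h := mul_le_mul_of_nonneg_left h10 hsqpos.le
    rw [show sq * (sq * ε') = sq * sq * ε' by ring, hsqsq] at h
    linarith
  have hepsrn : (1000000:ℝ) * 1000000 ≤ rn * ε' := by
    have h := mul_le_mul_of_nonneg_right hsq6 (show (0:ℝ) ≤ 1000000 by norm_num)
    linarith
  clear_value sq
  have hn1 : 1 ≤ n := by
    by_contra h
    have : n = 0 := by omega
    rw [this] at hrn_def
    simp [hrn_def] at hrnpos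
  have hΔrn : Δ ≤ ε' / 100 * rn := hΔδ
  have hεrn_le : ε' * rn ≤ rn := by
    have h := mul_le_mul_of_nonneg_right hε'1 hrn0
    linarith
  have hΔrn2 : Δ ≤ rn / 100 := by linarith
  -- nat quantities
  set m : ℕ := n / 2 with hm_def
  set k : ℕ := ⌊rn / 2 - Δ⌋₊ with hk_def
  set L : ℕ := ⌈sq / 2⌉₊ with hL_def
  have h0 : (0:ℝ) ≤ rn / 2 - Δ := by linarith
  have hk_le : (k:ℝ) ≤ rn / 2 - Δ := Nat.floor_le h0
  have hk_gt : rn / 2 - Δ - 1 < k := by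
    have := Nat.lt_floor_add_one (rn / 2 - Δ)
    linarith
  have hL_ge : sq / 2 ≤ (L:ℝ) := Nat.le_ceil _
  have hL_lt : (L:ℝ) < sq / 2 + 1 := Nat.ceil_lt_add_one (by positivity)
  have hL1 : 1 ≤ L := by
    rw [hL_def, Nat.one_le_ceil_iff]; positivity
  have hcard : Nat.card {x : Fin n → ZMod 2 // (hammingNorm x : ℝ) ≤ rn / 2 - Δ}
      = Nat.card {x : Fin n → ZMod 2 // hammingNorm x ≤ k} := by
    refine Nat.card_congr (Equiv.subtypeEquivRight fun x => ?_)
    rw [hk_def]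
    exact (Nat.le_floor_iff h0).symm
  have hm2 : m = n / 2 := hm_def
  clear_value m k L
  have hLk : L ≤ k := by
    have : (L:ℝ) < (k:ℝ) := by linarith
    exact_mod_cast this.le
  set j : ℕ := k + 1 - L with hj_def
  have hjk : j ≤ k := by omega
  have hj1 : 1 ≤ j := by omega
  have hjr : (j:ℝ) = (k:ℝ) + 1 - (L:ℝ) := by
    rw [hj_def]; push_cast [Nat.cast_sub (by omega : L ≤ k + 1)]; ring
  have hkm : k ≤ m := by
    have h2k : 2 * k ≤ n := by
      have h : ((2 * k : ℕ) : ℝ) ≤ ((n:ℕ) : ℝ) := by rw [← hrn_def]; push_cast; linarith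
      exact_mod_cast h
    omega
  have hjm : j ≤ m := le_trans hjk hkm
  set t : ℕ := m - j with ht_def
  clear_value t
  have htm : j + t = m := by omega
  have hmn : 2 * m ≤ n ∧ n ≤ 2 * m + 1 := by omega
  have hm_le : (m:ℝ) ≤ rn / 2 := by
    have h : ((2 * m : ℕ) : ℝ) ≤ rn := hrn_def ▸ Nat.cast_le.2 hmn.1
    push_cast at h; linarith
  have htr : (t:ℝ) = (m:ℝ) - (j:ℝ) := by
    rw [ht_def]; push_cast [Nat.cast_sub hjm]; ring
  -- real bounds on t and j
  set T : ℝ := Δ + sq / 2 + 2 with hT_def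
  clear_value T
  have hTpos : 0 < T := by rw [hT_def]; positivity
  have ht_le : (t:ℝ) + 1 ≤ T := by rw [htr, hjr]; linarith
  have hj_ge : rn / 2 - T + 1 ≤ (j:ℝ) := by rw [hjr]; linarith
  have hT_le : T ≤ ε' / 50 * rn := by rw [hT_def]; linarith
  have hT_rn : 2 * T ≤ rn / 25 := by linarith
  -- counting
  set B := Nat.card {x : Fin n → ZMod 2 // (hammingNorm x : ℝ) ≤ rn / 2 - Δ} with hB_def
  clear_value B
  have hBnat : L * n.choose j ≤ B := by
    rw [hcard]
    refine le_trans ?_ (count_ball n k)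
    calc L * n.choose j = ∑ w ∈ Finset.Icc j k, n.choose j := by
          rw [Finset.sum_const, Nat.card_Icc, smul_eq_mul]
          congr 1
          omega
      _ ≤ ∑ w ∈ Finset.Icc j k, n.choose w := by
          refine Finset.sum_le_sum fun w hw => ?_
          rw [Finset.mem_Icc] at hw
          exact choose_mono_left hw.1 (hm2 ▸ le_trans hw.2 hkm)
      _ ≤ ∑ w ∈ Finset.range (k+1), n.choose w := by
          refine Finset.sum_le_sum_of_subset fun w hw => ?_
          rw [Finset.mem_Icc] at hw
          rw [Finset.mem_range]
          omega
  have hB : (L:ℝ) * (n.choose j : ℝ) ≤ (B:ℝ) := by exact_mod_cast hBnat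
  -- middle binomial lower bound
  have hmid : (2:ℝ) ^ n ≤ (n.choose m : ℝ) * (2 * sq) := by
    have h4 := middle_sq n hn1
    have h4r : (4:ℝ) ^ n ≤ (n.choose m : ℝ) ^ 2 * (4 * rn) := by
      rw [hrn_def]
      rw [← hm2] at h4
      exact_mod_cast h4
    have h2n : (0:ℝ) < 2 ^ n := by positivity
    have hcnn : (0:ℝ) ≤ (n.choose m : ℝ) := Nat.cast_nonneg _
    have hsq4 : ((2:ℝ) ^ n) ^ 2 = 4 ^ n := by
      rw [← pow_mul, pow_mul']; norm_num
    have hsq4' : ((n.choose m : ℝ) * (2 * sq)) ^ 2 = (n.choose m : ℝ) ^ 2 * (4 * rn) := by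
      rw [← hsqsq]; ring
    calc (2:ℝ) ^ n = Real.sqrt (((2:ℝ) ^ n) ^ 2) := (Real.sqrt_sq h2n.le).symm
      _ ≤ Real.sqrt (((n.choose m : ℝ) * (2 * sq)) ^ 2) := by
          apply Real.sqrt_le_sqrt
          rw [hsq4, hsq4']
          exact h4r
      _ = (n.choose m : ℝ) * (2 * sq) := Real.sqrt_sq (by positivity)
  -- ratio bound
  set E : ℝ := ((t:ℝ) ^ 2 + 2 * (t:ℝ)) / (j:ℝ) with hE_def
  clear_value E
  have hjpos : (0:ℝ) < (j:ℝ) := by exact_mod_cast hj1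
  have hE_nonneg : 0 ≤ E := by rw [hE_def]; positivity
  have hratio : (n.choose m : ℝ) ≤ (n.choose j : ℝ) * Real.exp E := by
    have h := ratio_bound n t j hj1 (by omega)
    rw [htm] at h
    rw [hE_def]
    exact h
  -- the target quantity
  set s : ℝ := Δ + Real.sqrt (2 * rn) + 2 with hs_def
  clear_value s
  have hsqrt2 : Real.sqrt (2 * rn) = Real.sqrt 2 * sq := by
    rw [hsq_def]; exact Real.sqrt_mul (by norm_num) rn
  have hsqrt2_ge : (1.41:ℝ) ≤ Real.sqrt 2 := by
    have : (1.41:ℝ) = Real.sqrt (1.41^2) := by rw [Real.sqrt_sq]; norm_num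
    rw [this]
    exact Real.sqrt_le_sqrt (by norm_num)
  have hsqrt2_le : Real.sqrt 2 ≤ (1.5:ℝ) := by
    have : (1.5:ℝ) = Real.sqrt (1.5^2) := by rw [Real.sqrt_sq]; norm_num
    rw [this]
    exact Real.sqrt_le_sqrt (by norm_num)
  have hs2sq : 1.41 * sq ≤ Real.sqrt 2 * sq :=
    mul_le_mul_of_nonneg_right hsqrt2_ge hsqpos.le
  have hTs : T ≤ s := by
    rw [hT_def, hs_def, hsqrt2]
    linarith
  have hsT : 1.28 * rn ≤ s ^ 2 - T ^ 2 := by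
    have h1 : s - T = Real.sqrt 2 * sq - sq / 2 := by
      rw [hs_def, hT_def, hsqrt2]; ring
    have h2 : 0.91 * sq ≤ s - T := by rw [h1]; linarith
    have h3 : 1.41 * sq ≤ s + T := by
      rw [hs_def, hT_def, hsqrt2]; linarith
    have h4 : s ^ 2 - T ^ 2 = (s - T) * (s + T) := by ring
    have h5 : (0.91 * sq) * (1.41 * sq) ≤ (s - T) * (s + T) :=
      mul_le_mul h2 h3 (by positivity) (by linarith)
    rw [h4]
    have h6 : (0.91 * sq) * (1.41 * sq) = 1.2831 * (sq * sq) := by ring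
    rw [h6, hsqsq] at h5
    linarith
  -- bound on E
  have hT45 : (4 + ε') * T ≤ ε' / 2 * rn := by
    have h1 : (4 + ε') * T ≤ 5 * T :=
      mul_le_mul_of_nonneg_right (by linarith) hTpos.le
    linarith
  have hE_le : E ≤ (2 + ε' / 2) * T ^ 2 / rn := by
    have hnum : (t:ℝ) ^ 2 + 2 * t ≤ T ^ 2 := by
      have h1 : ((t:ℝ) + 1) ^ 2 ≤ T ^ 2 := by
        apply pow_le_pow_left₀ (by positivity) ht_le
      linarith [h1]
    have hden : (rn - 2 * T) / 2 ≤ (j:ℝ) := by linarith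
    have hdenpos : (0:ℝ) < (rn - 2 * T) / 2 := by linarith
    have h1 : E ≤ T ^ 2 / ((rn - 2 * T) / 2) := by
      rw [hE_def]
      exact div_le_div₀ (sq_nonneg T) hnum hdenpos hden
    refine le_trans h1 ?_
    rw [div_le_div_iff₀ hdenpos hrnpos]
    have hint : (0:ℝ) ≤ T ^ 2 * (ε' / 2 * rn - (4 + ε') * T) :=
      mul_nonneg (sq_nonneg T) (by linarith)
    linarith [hint]
  -- log 4 bound
  have hlog4 : Real.log 4 ≤ 1.39 := by
    have h : Real.log 4 = 2 * Real.log 2 := by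
      rw [show (4:ℝ) = 2 ^ 2 by norm_num, Real.log_pow]; push_cast; ring
    have := Real.log_two_lt_d9
    rw [h]; linarith
  -- exponent inequality
  have hexp_ineq : E + Real.log 4 ≤ (2 + ε) * s ^ 2 / rn := by
    have hT2s2 : T ^ 2 ≤ s ^ 2 := pow_le_pow_left₀ hTpos.le hTs 2
    have hT2s2' : ε' * T ^ 2 ≤ ε' * s ^ 2 := mul_le_mul_of_nonneg_left hT2s2 hε'pos.le
    have hT2nn : (0:ℝ) ≤ ε' * T ^ 2 := mul_nonneg hε'pos.le (sq_nonneg T)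
    have key : (2 + ε' / 2) * T ^ 2 + 1.39 * rn ≤ (2 + ε') * s ^ 2 := by linarith
    have h1 : (2 + ε') * s ^ 2 ≤ (2 + ε) * s ^ 2 :=
      mul_le_mul_of_nonneg_right (by linarith) (sq_nonneg s)
    calc E + Real.log 4 ≤ (2 + ε' / 2) * T ^ 2 / rn + 1.39 := by linarith
      _ = ((2 + ε' / 2) * T ^ 2 + 1.39 * rn) / rn := by field_simp
      _ ≤ ((2 + ε) * s ^ 2) / rn := (div_le_div_iff_of_pos_right hrnpos).2 (le_trans key h1)
      _ = (2 + ε) * s ^ 2 / rn := rfl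
  -- final assembly
  have h2npos : (0:ℝ) < 2 ^ n := by positivity
  rw [le_div_iff₀ h2npos]
  have e1 : Real.exp (-(2 + ε) * s ^ 2 / rn) ≤ Real.exp (-E - Real.log 4) := by
    apply Real.exp_le_exp.2
    have hre : -(2 + ε) * s ^ 2 / rn = -((2 + ε) * s ^ 2 / rn) := by ring
    rw [hre]
    linarith
  have e2 : Real.exp (-E - Real.log 4) = Real.exp (-E) / 4 := by
    rw [Real.exp_sub, Real.exp_log (by norm_num : (0:ℝ) < 4)]
  have hstep : (n.choose m : ℝ) * Real.exp (-E) ≤ (n.choose j : ℝ) := by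
    have h := mul_le_mul_of_nonneg_right hratio (Real.exp_nonneg (-E))
    rwa [mul_assoc, ← Real.exp_add, add_neg_cancel, Real.exp_zero, mul_one] at h
  calc Real.exp (-(2 + ε) * s ^ 2 / rn) * 2 ^ n
      ≤ (Real.exp (-E) / 4) * 2 ^ n := by
        rw [← e2]; exact mul_le_mul_of_nonneg_right e1 (by positivity)
    _ ≤ (Real.exp (-E) / 4) * ((n.choose m : ℝ) * (2 * sq)) :=
        mul_le_mul_of_nonneg_left hmid (by positivity)
    _ = (sq / 2) * ((n.choose m : ℝ) * Real.exp (-E)) := by ring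
    _ ≤ (L:ℝ) * ((n.choose m : ℝ) * Real.exp (-E)) :=
        mul_le_mul_of_nonneg_right hL_ge (by positivity)
    _ ≤ (L:ℝ) * (n.choose j : ℝ) :=
        mul_le_mul_of_nonneg_left hstep (Nat.cast_nonneg L)
    _ ≤ (B:ℝ) := hB
end

section
/- For every integer n ≥ 1 and every real number R with 0 < R ≤ n, there exists an F_2-linear code C ⊆ F_2^n with covering radius at most R and dimension k ≤ ⌈log_2( n·(log 2) / v_n(R) )⌉, where log 2 denotes the natural logarithm of 2. -/
open Finset

/-- The covering radius of `C ⊆ F_2^n`: the least `r ≥ 0` such that `B_n(C; r) = F_2^n`. -/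
noncomputable def covRad (n : ℕ) (C : Set (Fin n → ZMod 2)) : ℝ :=
  sInf {r : ℝ | 0 ≤ r ∧ ∀ x : Fin n → ZMod 2, ∃ c ∈ C, (hammingNorm (c + x) : ℝ) ≤ r}

open scoped Classical in
noncomputable def uncov (n : ℕ) (R : ℝ) (C : Set (Fin n → ZMod 2)) : Finset (Fin n → ZMod 2) :=
  Finset.univ.filter (fun x => ¬ ∃ c ∈ C, (hammingNorm (c + x) : ℝ) ≤ R)

lemma mem_uncov {n : ℕ} {R : ℝ} {C : Set (Fin n → ZMod 2)} {x : Fin n → ZMod 2} :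
    x ∈ uncov n R C ↔ ¬ ∃ c ∈ C, (hammingNorm (c + x) : ℝ) ≤ R := by
  classical simp [uncov]

lemma uncov_anti {n : ℕ} {R : ℝ} {C D : Set (Fin n → ZMod 2)} (h : C ⊆ D) :
    uncov n R D ⊆ uncov n R C := by
  intro x hx
  rw [mem_uncov] at hx ⊢
  exact fun ⟨c, hc, hcn⟩ => hx ⟨c, h hc, hcn⟩

lemma step (n : ℕ) (R : ℝ) (C : Set (Fin n → ZMod 2)) :
    ∃ z : Fin n → ZMod 2,
      (uncov n R (C ∪ (· + z) '' C)).card * 2 ^ n ≤ (uncov n R C).card ^ 2 := by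
  classical
  set U := uncov n R C with hU
  have hcardV : (Finset.univ : Finset (Fin n → ZMod 2)).card = 2 ^ n := by
    simp [Finset.card_univ]
  -- description of the uncovered set of the doubled code
  have hdesc : ∀ z : Fin n → ZMod 2,
      uncov n R (C ∪ (· + z) '' C) = U.filter (fun x => x + z ∈ U) := by
    intro z
    ext x
    simp only [Finset.mem_filter, hU, mem_uncov, Set.mem_union, Set.mem_image]
    constructor
    · intro h
      refine ⟨fun ⟨c, hc, hcn⟩ => h ⟨c, Or.inl hc, hcn⟩, fun ⟨c, hc, hcn⟩ => ?_⟩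
      refine h ⟨c + z, Or.inr ⟨c, hc, rfl⟩, ?_⟩
      have : c + z + x = c + (x + z) := by abel
      rwa [this]
    · rintro ⟨h1, h2⟩ ⟨c, hc | ⟨c', hc', rfl⟩, hcn⟩
      · exact h1 ⟨c, hc, hcn⟩
      · refine h2 ⟨c', hc', ?_⟩
        have : c' + z + x = c' + (x + z) := by abel
        rwa [this] at hcn
  -- double counting
  have hsum : ∑ z : Fin n → ZMod 2, (U.filter (fun x => x + z ∈ U)).card = U.card ^ 2 := by
    have : ∀ z, (U.filter (fun x => x + z ∈ U)).card
        = ∑ x ∈ U, if x + z ∈ U then 1 else 0 := by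
      intro z; rw [Finset.card_filter]
    simp only [this]
    rw [Finset.sum_comm]
    have hrow : ∀ x ∈ U, (∑ z : Fin n → ZMod 2, if x + z ∈ U then 1 else 0) = U.card := by
      intro x _
      rw [← Finset.card_filter]
      refine Finset.card_bij (fun z _ => x + z) ?_ ?_ ?_
      · intro a ha; simpa using (Finset.mem_filter.mp ha).2
      · intro a ha b hb hab
        simpa using congrArg (fun w => x + w) hab
      · intro b hb
        refine ⟨x + b, ?_, ?_⟩
        · simp only [Finset.mem_filter, Finset.mem_univ, true_and]
          have h0 : x + x = 0 := funext fun i => CharTwo.add_self_eq_zero (x i)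
          have : x + (x + b) = b := by rw [← add_assoc, h0, zero_add]
          rwa [this]
        · show x + (x + b) = b
          have h0 : x + x = 0 := funext fun i => CharTwo.add_self_eq_zero (x i)
          rw [← add_assoc, h0, zero_add]
    rw [Finset.sum_congr rfl hrow, Finset.sum_const, smul_eq_mul, sq]
  -- minimum is at most the average
  by_contra hcon
  push_neg at hcon
  have hlt : ∀ z : Fin n → ZMod 2,
      U.card ^ 2 < (U.filter (fun x => x + z ∈ U)).card * 2 ^ n := by
    intro z
    have h := hcon z
    rw [hdesc z] at h
    exact h
  have : ∑ z : Fin n → ZMod 2, U.card ^ 2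
      < ∑ z : Fin n → ZMod 2, (U.filter (fun x => x + z ∈ U)).card * 2 ^ n := by
    refine Finset.sum_lt_sum_of_nonempty ?_ (fun z _ => hlt z)
    exact Finset.univ_nonempty
  rw [← Finset.sum_mul, hsum, Finset.sum_const, hcardV, smul_eq_mul, mul_comm] at this
  exact lt_irrefl _ this

lemma exists_code (n : ℕ) (R : ℝ) (k : ℕ) :
    ∃ C : Submodule (ZMod 2) (Fin n → ZMod 2),
      Module.finrank (ZMod 2) C ≤ k ∧
      (uncov n R (C : Set (Fin n → ZMod 2))).card * 2 ^ (n * (2 ^ k - 1)) ≤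
        (uncov n R ((⊥ : Submodule (ZMod 2) (Fin n → ZMod 2)) : Set (Fin n → ZMod 2))).card
          ^ (2 ^ k) := by
  induction k with
  | zero =>
    refine ⟨⊥, ?_, ?_⟩
    · simp [finrank_bot]
    · simp
  | succ k ih =>
    obtain ⟨C, hrk, hcard⟩ := ih
    obtain ⟨z, hz⟩ := step n R (C : Set (Fin n → ZMod 2))
    refine ⟨C ⊔ Submodule.span (ZMod 2) {z}, ?_, ?_⟩
    · have h1 : Module.finrank (ZMod 2) (Submodule.span (ZMod 2) ({z} : Set (Fin n → ZMod 2))) ≤ 1 := by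
        rcases eq_or_ne z 0 with rfl | hz0
        · rw [Submodule.span_zero_singleton]; simp [finrank_bot]
        · rw [finrank_span_singleton hz0]
      calc Module.finrank (ZMod 2) ↥(C ⊔ Submodule.span (ZMod 2) {z})
          ≤ Module.finrank (ZMod 2) C
            + Module.finrank (ZMod 2) (Submodule.span (ZMod 2) ({z} : Set (Fin n → ZMod 2))) :=
            Submodule.finrank_add_le_finrank_add_finrank _ _
        _ ≤ k + 1 := add_le_add hrk h1
    · -- cardinality bound
      have hsub : ((C : Set (Fin n → ZMod 2)) ∪ (· + z) '' (C : Set (Fin n → ZMod 2)))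
          ⊆ ((C ⊔ Submodule.span (ZMod 2) {z} : Submodule (ZMod 2) (Fin n → ZMod 2)) : Set (Fin n → ZMod 2)) := by
        rintro x (hx | ⟨c, hc, rfl⟩)
        · exact Submodule.mem_sup_left hx
        · exact Submodule.add_mem _ (Submodule.mem_sup_left hc)
            (Submodule.mem_sup_right (Submodule.mem_span_singleton_self z))
      have hmono := Finset.card_le_card (uncov_anti (R := R) hsub)
      have h2k : 1 ≤ 2 ^ k := Nat.one_le_two_pow
      have hexp : n * (2 ^ (k + 1) - 1) = n + n * (2 ^ k - 1) * 2 := by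
        obtain ⟨b, hb⟩ : ∃ b, 2 ^ k = b + 1 := ⟨2 ^ k - 1, by omega⟩
        rw [pow_succ, hb]
        have h1 : (b + 1) * 2 - 1 = 2 * b + 1 := by omega
        have h2 : (b + 1) - 1 = b := by omega
        rw [h1, h2]
        ring
      set u' := (uncov n R ((C ⊔ Submodule.span (ZMod 2) {z} : Submodule (ZMod 2) (Fin n → ZMod 2)) : Set (Fin n → ZMod 2))).card
      set u := (uncov n R (C : Set (Fin n → ZMod 2))).card
      set u0 := (uncov n R ((⊥ : Submodule (ZMod 2) (Fin n → ZMod 2)) : Set (Fin n → ZMod 2))).card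
      calc u' * 2 ^ (n * (2 ^ (k + 1) - 1))
          = (u' * 2 ^ n) * (2 ^ (n * (2 ^ k - 1))) ^ 2 := by
            rw [hexp, pow_add, ← pow_mul]; ring
        _ ≤ ((uncov n R ((C : Set (Fin n → ZMod 2)) ∪ (· + z) '' (C : Set (Fin n → ZMod 2)))).card * 2 ^ n)
              * (2 ^ (n * (2 ^ k - 1))) ^ 2 := by
            exact Nat.mul_le_mul_right _ (Nat.mul_le_mul_right _ hmono)
        _ ≤ u ^ 2 * (2 ^ (n * (2 ^ k - 1))) ^ 2 := Nat.mul_le_mul_right _ hz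
        _ = (u * 2 ^ (n * (2 ^ k - 1))) ^ 2 := by ring
        _ ≤ (u0 ^ 2 ^ k) ^ 2 := Nat.pow_le_pow_left hcard 2
        _ = u0 ^ 2 ^ (k + 1) := by rw [← pow_mul, pow_succ]

lemma analytic (n m K : ℕ) (hm1 : 1 ≤ m) (hm2 : m ≤ 2 ^ n) (hK1 : 1 ≤ K)
    (hKv : (n : ℝ) * Real.log 2 ≤ (K : ℝ) * ((m : ℝ) / 2 ^ n)) :
    ((2 ^ n - m : ℕ) : ℝ) ^ K * 2 ^ n < ((2 : ℝ) ^ n) ^ K := by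
  have hN : (0 : ℝ) < 2 ^ n := by positivity
  set v : ℝ := (m : ℝ) / 2 ^ n with hv
  have hv0 : 0 < v := by
    apply div_pos _ hN
    exact_mod_cast Nat.lt_of_lt_of_le Nat.zero_lt_one hm1
  have hv1 : v ≤ 1 := by
    rw [hv, div_le_one hN]
    exact_mod_cast hm2
  have ha : ((2 ^ n - m : ℕ) : ℝ) = 2 ^ n * (1 - v) := by
    rw [Nat.cast_sub hm2, hv]
    push_cast
    field_simp
  rw [ha, mul_pow]
  rcases eq_or_lt_of_le hv1 with hveq | hvlt
  · have : (1 - v) = 0 := by rw [← hveq]; ring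
    rw [this, zero_pow (by omega), mul_zero, zero_mul]
    positivity
  · have h1v : 0 < 1 - v := by linarith
    have h1 : 1 - v < Real.exp (-v) := by
      have := Real.add_one_lt_exp (x := -v) (by intro h; rw [neg_eq_zero] at h; exact hv0.ne' h)
      linarith
    have h2 : (1 - v) ^ K < (Real.exp (-v)) ^ K :=
      pow_lt_pow_left₀ h1 (le_of_lt h1v) (by omega)
    have h3 : (Real.exp (-v)) ^ K = Real.exp ((K : ℝ) * (-v)) := (Real.exp_nat_mul _ _).symm
    have h4 : Real.exp ((K : ℝ) * (-v)) ≤ Real.exp (-((n : ℝ) * Real.log 2)) := by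
      apply Real.exp_le_exp.mpr
      have : (K : ℝ) * (-v) = -((K : ℝ) * v) := by ring
      rw [this]
      exact neg_le_neg hKv
    have h5 : Real.exp (-((n : ℝ) * Real.log 2)) = 1 / 2 ^ n := by
      rw [Real.exp_neg, Real.exp_nat_mul, Real.exp_log (by norm_num : (0:ℝ) < 2)]
      rw [one_div]
    have h6 : (1 - v) ^ K < 1 / 2 ^ n := by
      calc (1 - v) ^ K < (Real.exp (-v)) ^ K := h2
        _ = Real.exp ((K : ℝ) * (-v)) := h3
        _ ≤ Real.exp (-((n : ℝ) * Real.log 2)) := h4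
        _ = 1 / 2 ^ n := h5
    calc ((2:ℝ) ^ n) ^ K * (1 - v) ^ K * 2 ^ n
        < ((2:ℝ) ^ n) ^ K * (1 / 2 ^ n) * 2 ^ n := by
          have hp : (0 : ℝ) < ((2:ℝ) ^ n) ^ K := by positivity
          exact mul_lt_mul_of_pos_right (mul_lt_mul_of_pos_left h6 hp) hN
      _ = ((2:ℝ) ^ n) ^ K := by field_simp

set_option maxHeartbeats 1000000 in
/-- Cohen. For every `n ≥ 1` and `0 < R ≤ n`, there is a linear code
`C ⊆ F_2^n` of covering radius at most `R` and dimension `k ≤ ⌈log₂(n (log 2) / v_n(R))⌉`. -/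
theorem cohen_sphere_covering_bound
    (n : ℕ) (hn : 1 ≤ n) (R : ℝ) (hR0 : 0 < R) (hRn : R ≤ n) :
    ∃ C : Submodule (ZMod 2) (Fin n → ZMod 2),
      (Module.finrank (ZMod 2) C : ℤ) ≤
        ⌈Real.logb 2 ((n : ℝ) * Real.log 2 /
          ((Nat.card {x : Fin n → ZMod 2 // (hammingNorm x : ℝ) ≤ R} : ℝ) / 2 ^ n))⌉ ∧
      covRad n (C : Set (Fin n → ZMod 2)) ≤ R := by
  classical
  set m : ℕ := Nat.card {x : Fin n → ZMod 2 // (hammingNorm x : ℝ) ≤ R} with hm_def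
  have hcardV : Fintype.card (Fin n → ZMod 2) = 2 ^ n := by simp
  have hm_eq : m = (Finset.univ.filter (fun x : Fin n → ZMod 2 => (hammingNorm x : ℝ) ≤ R)).card := by
    rw [hm_def, Nat.card_eq_fintype_card, Fintype.card_subtype]
  have hm1 : 1 ≤ m := by
    have : Nonempty {x : Fin n → ZMod 2 // (hammingNorm x : ℝ) ≤ R} :=
      ⟨⟨0, by simp [hR0.le]⟩⟩
    exact Nat.one_le_iff_ne_zero.mpr (Nat.card_ne_zero.mpr ⟨this, inferInstance⟩)
  have hm2 : m ≤ 2 ^ n := by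
    rw [hm_eq]
    calc (Finset.univ.filter (fun x : Fin n → ZMod 2 => (hammingNorm x : ℝ) ≤ R)).card
        ≤ (Finset.univ : Finset (Fin n → ZMod 2)).card := Finset.card_filter_le _ _
      _ = 2 ^ n := by rw [Finset.card_univ, hcardV]
  -- the count of uncovered points for the trivial code
  have hu0 : (uncov n R ((⊥ : Submodule (ZMod 2) (Fin n → ZMod 2)) : Set (Fin n → ZMod 2))).card
      = 2 ^ n - m := by
    have heq : uncov n R ((⊥ : Submodule (ZMod 2) (Fin n → ZMod 2)) : Set (Fin n → ZMod 2))
        = Finset.univ.filter (fun x : Fin n → ZMod 2 => ¬ ((hammingNorm x : ℝ) ≤ R)) := by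
      ext x
      rw [mem_uncov, Finset.mem_filter]
      simp [Submodule.mem_bot]
    rw [heq]
    have := Finset.card_filter_add_card_filter_not
      (s := (Finset.univ : Finset (Fin n → ZMod 2)))
      (p := fun x : Fin n → ZMod 2 => (hammingNorm x : ℝ) ≤ R)
    rw [Finset.card_univ, hcardV] at this
    omega
  set ratio : ℝ := (n : ℝ) * Real.log 2 / ((m : ℝ) / 2 ^ n) with hratio_def
  have hN : (0 : ℝ) < 2 ^ n := by positivity
  have hv0 : (0 : ℝ) < (m : ℝ) / 2 ^ n := by
    apply div_pos _ hN
    exact_mod_cast hm1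
  have hv1 : (m : ℝ) / 2 ^ n ≤ 1 := by
    rw [div_le_one hN]
    exact_mod_cast hm2
  have hlog2 : (0 : ℝ) < Real.log 2 := Real.log_pos (by norm_num)
  have hnum : (0 : ℝ) < (n : ℝ) * Real.log 2 := by
    apply mul_pos _ hlog2
    exact_mod_cast hn
  have hratio_pos : 0 < ratio := div_pos hnum hv0
  have hratio_half : (1 : ℝ) / 2 < ratio := by
    have h1 : (n : ℝ) * Real.log 2 ≤ ratio := by
      rw [hratio_def]
      rw [le_div_iff₀ hv0]
      nlinarith [hnum, hv1, hv0]
    have h2 : Real.log 2 ≤ (n : ℝ) * Real.log 2 := by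
      nlinarith [hlog2, (show (1:ℝ) ≤ n by exact_mod_cast hn)]
    have h3 : (1 : ℝ) / 2 < Real.log 2 := by
      have := Real.log_two_gt_d9
      linarith
    linarith
  have hceil_nonneg : 0 ≤ ⌈Real.logb 2 ratio⌉ := by
    have h1 : ((-1 : ℤ) : ℝ) < Real.logb 2 ratio := by
      push_cast
      rw [Real.logb, lt_div_iff₀ hlog2]
      have := Real.log_lt_log (by norm_num : (0:ℝ) < 1/2) hratio_half
      rw [one_div, Real.log_inv] at this
      linarith
    have := Int.lt_ceil.mpr h1
    omega
  set k : ℕ := (⌈Real.logb 2 ratio⌉).toNat with hk_def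
  have hkZ : ((k : ℤ) : ℝ) = ((⌈Real.logb 2 ratio⌉ : ℤ) : ℝ) := by
    rw [hk_def]
    exact_mod_cast congrArg (Int.cast : ℤ → ℝ) (Int.toNat_of_nonneg hceil_nonneg)
  have hK2 : ratio ≤ (2 : ℝ) ^ k := by
    calc ratio = (2 : ℝ) ^ (Real.logb 2 ratio) :=
          (Real.rpow_logb (by norm_num) (by norm_num) hratio_pos).symm
      _ ≤ (2 : ℝ) ^ ((k : ℕ) : ℝ) := by
          apply Real.rpow_le_rpow_of_exponent_le one_le_two
          calc Real.logb 2 ratio ≤ (⌈Real.logb 2 ratio⌉ : ℝ) := Int.le_ceil _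
            _ = ((k : ℕ) : ℝ) := by exact_mod_cast hkZ.symm
      _ = (2 : ℝ) ^ (k : ℕ) := Real.rpow_natCast 2 k
  set K : ℕ := 2 ^ k with hK_def
  have hK1 : 1 ≤ K := Nat.one_le_two_pow
  have hKv : (n : ℝ) * Real.log 2 ≤ (K : ℝ) * ((m : ℝ) / 2 ^ n) := by
    have hKcast : (K : ℝ) = (2 : ℝ) ^ k := by rw [hK_def]; push_cast; ring
    rw [hKcast]
    calc (n : ℝ) * Real.log 2 = ratio * ((m : ℝ) / 2 ^ n) := by
          rw [hratio_def]; field_simp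
      _ ≤ (2 : ℝ) ^ k * ((m : ℝ) / 2 ^ n) := by
          apply mul_le_mul_of_nonneg_right hK2 hv0.le
  obtain ⟨C, hrk, hcard⟩ := exists_code n R k
  -- the code has no uncovered points
  have huncov : uncov n R (C : Set (Fin n → ZMod 2)) = ∅ := by
    by_contra hne
    have hpos : 1 ≤ (uncov n R (C : Set (Fin n → ZMod 2))).card :=
      Nat.one_le_iff_ne_zero.mpr (fun h => hne (Finset.card_eq_zero.mp h))
    have hreal : ((uncov n R (C : Set (Fin n → ZMod 2))).card : ℝ) * 2 ^ (n * (K - 1))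
        ≤ ((2 ^ n - m : ℕ) : ℝ) ^ K := by
      rw [hu0] at hcard
      have := hcard
      exact_mod_cast this
    have hana := analytic n m K hm1 hm2 hK1 hKv
    have hpow : ((2 : ℝ) ^ n) ^ K = 2 ^ (n * (K - 1)) * 2 ^ n := by
      rw [← pow_mul, ← pow_add]
      congr 1
      have : n * (K - 1) + n = n * K := by
        obtain ⟨b, hb⟩ : ∃ b, K = b + 1 := ⟨K - 1, by omega⟩
        rw [hb, Nat.add_sub_cancel]; ring
      rw [this]
    have hlt : ((2 ^ n - m : ℕ) : ℝ) ^ K < 2 ^ (n * (K - 1)) := by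
      rw [hpow] at hana
      have h2n : (0:ℝ) < 2 ^ n := hN
      nlinarith [hana]
    have : ((uncov n R (C : Set (Fin n → ZMod 2))).card : ℝ) * 2 ^ (n * (K - 1))
        < 2 ^ (n * (K - 1)) := lt_of_le_of_lt hreal hlt
    have hone : ((uncov n R (C : Set (Fin n → ZMod 2))).card : ℝ) < 1 := by
      have hp : (0:ℝ) < 2 ^ (n * (K - 1)) := by positivity
      nlinarith [this, hp]
    have : (1:ℝ) ≤ ((uncov n R (C : Set (Fin n → ZMod 2))).card : ℝ) := by exact_mod_cast hpos
    linarith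
  refine ⟨C, ?_, ?_⟩
  · have h1 : (Module.finrank (ZMod 2) C : ℤ) ≤ (k : ℤ) := by exact_mod_cast hrk
    have h2 : (k : ℤ) = ⌈Real.logb 2 ratio⌉ := Int.toNat_of_nonneg hceil_nonneg
    rw [hratio_def] at h2
    rw [← h2]
    exact h1
  · have hcov : ∀ x : Fin n → ZMod 2, ∃ c ∈ (C : Set (Fin n → ZMod 2)),
        (hammingNorm (c + x) : ℝ) ≤ R := by
      intro x
      by_contra h
      have : x ∈ uncov n R (C : Set (Fin n → ZMod 2)) := mem_uncov.mpr h
      rw [huncov] at this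
      exact absurd this (Finset.notMem_empty x)
    exact csInf_le ⟨0, fun r hr => hr.1⟩ ⟨hR0.le, hcov⟩
end

section
/- Let 0 ≤ ε < 1 and n ≥ 1. Then for every nonempty code C ⊆ F_2^n of size K, the ε-covering radius of C is at least n/2 − √( (n/2) · log( K/(1−ε) ) ), where log denotes the natural logarithm. -/
open Finset

/-- The fraction of points of `F_2^n` not contained in the `r`-neighborhood `B_n(C; r)`
of a set `C ⊆ F_2^n`. -/
noncomputable def uncoveredFrac (n : ℕ) (C : Set (Fin n → ZMod 2)) (r : ℝ) : ℝ :=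
  (Nat.card {x : Fin n → ZMod 2 // ¬ ∃ c ∈ C, (hammingNorm (c + x) : ℝ) ≤ r} : ℝ) / 2 ^ n

/-- The `ε`-covering radius of `C ⊆ F_2^n`: the least `r ≥ 0` such that the fraction of
points of `F_2^n` not contained in `B_n(C; r)` is at most `ε`. -/
noncomputable def epsCovRad (n : ℕ) (C : Set (Fin n → ZMod 2)) (ε : ℝ) : ℝ :=
  sInf {r : ℝ | 0 ≤ r ∧ uncoveredFrac n C r ≤ ε}

lemma mgf_sum (n : ℕ) (l : ℝ) :
    ∑ y : Fin n → ZMod 2, Real.exp (-l * (hammingNorm y : ℝ))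
      = (1 + Real.exp (-l)) ^ n := by
  classical
  have h1 : ∀ y : Fin n → ZMod 2,
      Real.exp (-l * (hammingNorm y : ℝ))
        = ∏ i, (if y i ≠ 0 then Real.exp (-l) else 1) := by
    intro y
    have hc : ((hammingNorm y : ℕ) : ℝ) = ∑ i, if y i ≠ 0 then (1:ℝ) else 0 := by
      rw [hammingNorm, Finset.card_filter]
      push_cast
      rfl
    rw [hc, Finset.mul_sum, Real.exp_sum]
    refine Finset.prod_congr rfl fun i _ => ?_
    split_ifs <;> simp
  simp_rw [h1]
  have h2 : ∑ y : Fin n → ZMod 2, ∏ i, (if y i ≠ 0 then Real.exp (-l) else 1)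
      = ∏ _i : Fin n, ∑ a : ZMod 2, (if a ≠ 0 then Real.exp (-l) else 1) := by
    rw [Finset.prod_univ_sum (fun _ => (Finset.univ : Finset (ZMod 2)))
      (fun _ a => if a ≠ 0 then Real.exp (-l) else 1), Fintype.piFinset_univ]
  rw [h2]
  have h3 : ∑ a : ZMod 2, (if a ≠ 0 then Real.exp (-l) else 1) = 1 + Real.exp (-l) := by
    have : (Finset.univ : Finset (ZMod 2)) = {0, 1} := by decide
    rw [this, Finset.sum_pair (by decide : (0 : ZMod 2) ≠ 1)]
    norm_num
  rw [h3, Finset.prod_const, Finset.card_univ, Fintype.card_fin]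

lemma ball_card_le (n : ℕ) (l r : ℝ) (hl : 0 ≤ l) :
    (Nat.card {y : Fin n → ZMod 2 // (hammingNorm y : ℝ) ≤ r} : ℝ)
      ≤ Real.exp (l * r) * (1 + Real.exp (-l)) ^ n := by
  classical
  rw [Nat.card_eq_fintype_card, Fintype.card_subtype]
  have h1 : ((Finset.filter (fun y : Fin n → ZMod 2 => (hammingNorm y : ℝ) ≤ r)
      Finset.univ).card : ℝ)
      = ∑ y ∈ Finset.filter (fun y : Fin n → ZMod 2 => (hammingNorm y : ℝ) ≤ r)
          Finset.univ, (1 : ℝ) := by simp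
  rw [h1]
  have h2 : ∑ y ∈ Finset.filter (fun y : Fin n → ZMod 2 => (hammingNorm y : ℝ) ≤ r)
          Finset.univ, (1 : ℝ)
      ≤ ∑ y ∈ Finset.filter (fun y : Fin n → ZMod 2 => (hammingNorm y : ℝ) ≤ r)
          Finset.univ, Real.exp (l * (r - (hammingNorm y : ℝ))) := by
    refine Finset.sum_le_sum fun y hy => ?_
    rw [Finset.mem_filter] at hy
    rw [← Real.exp_zero]
    exact Real.exp_le_exp.2 (by nlinarith [hy.2])
  have h3 : ∑ y ∈ Finset.filter (fun y : Fin n → ZMod 2 => (hammingNorm y : ℝ) ≤ r)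
          Finset.univ, Real.exp (l * (r - (hammingNorm y : ℝ)))
      ≤ ∑ y : Fin n → ZMod 2, Real.exp (l * (r - (hammingNorm y : ℝ))) :=
    Finset.sum_le_sum_of_subset_of_nonneg (Finset.filter_subset _ _)
      (fun y _ _ => (Real.exp_pos _).le)
  have h4 : ∑ y : Fin n → ZMod 2, Real.exp (l * (r - (hammingNorm y : ℝ)))
      = Real.exp (l * r) * (1 + Real.exp (-l)) ^ n := by
    rw [← mgf_sum n l, Finset.mul_sum]
    refine Finset.sum_congr rfl fun y _ => ?_
    rw [← Real.exp_add]
    ring_nf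
  linarith

lemma ball_card_le_hoeffding (n : ℕ) (hn : 1 ≤ n) (t : ℝ) (ht : 0 ≤ t) :
    (Nat.card {y : Fin n → ZMod 2 // (hammingNorm y : ℝ) ≤ (n : ℝ) / 2 - t} : ℝ)
      ≤ 2 ^ n * Real.exp (-2 * t ^ 2 / n) := by
  have hn0 : (0 : ℝ) < n := by exact_mod_cast hn
  set l : ℝ := 4 * t / n with hl
  have hl0 : 0 ≤ l := by positivity
  refine le_trans (ball_card_le n l ((n : ℝ) / 2 - t) hl0) ?_
  have hcosh : (1 + Real.exp (-l)) = 2 * (Real.exp (-(l/2)) * Real.cosh (l/2)) := by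
    have e1 : Real.exp (-(l/2)) * Real.exp (l/2) = 1 := by
      rw [← Real.exp_add]; simp
    have e2 : Real.exp (-(l/2)) * Real.exp (-(l/2)) = Real.exp (-l) := by
      rw [← Real.exp_add]; ring_nf
    rw [Real.cosh_eq]
    nlinarith [e1, e2]
  have hfac : Real.exp (-(l/2)) * Real.cosh (l/2) ≤ Real.exp (-(l/2) + (l/2)^2/2) := by
    rw [Real.exp_add]
    exact mul_le_mul_of_nonneg_left (Real.cosh_le_exp_half_sq _) (Real.exp_pos _).le
  have hpow : (1 + Real.exp (-l)) ^ n
      ≤ 2 ^ n * Real.exp (-(l/2) + (l/2)^2/2) ^ n := by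
    rw [hcosh, mul_pow]
    gcongr
  calc Real.exp (l * ((n : ℝ)/2 - t)) * (1 + Real.exp (-l)) ^ n
      ≤ Real.exp (l * ((n : ℝ)/2 - t)) * (2 ^ n * Real.exp (-(l/2) + (l/2)^2/2) ^ n) := by
        gcongr
    _ = 2 ^ n * (Real.exp (l * ((n : ℝ)/2 - t)) * Real.exp (↑n * (-(l/2) + (l/2)^2/2))) := by
        rw [← Real.exp_nat_mul]; ring
    _ = 2 ^ n * Real.exp (-2 * t ^ 2 / n) := by
        rw [← Real.exp_add]
        congr 1
        rw [hl]
        field_simp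
        ring

lemma covered_card_le (n : ℕ) (C : Set (Fin n → ZMod 2)) (r : ℝ) :
    Nat.card {x : Fin n → ZMod 2 // ∃ c ∈ C, (hammingNorm (c + x) : ℝ) ≤ r}
      ≤ Nat.card C * Nat.card {y : Fin n → ZMod 2 // (hammingNorm y : ℝ) ≤ r} := by
  classical
  rw [← Nat.card_prod]
  have := fun x : {x : Fin n → ZMod 2 // ∃ c ∈ C, (hammingNorm (c + x) : ℝ) ≤ r} => x.2
  choose g hg1 hg2 using this
  refine Nat.card_le_card_of_injective
    (fun x => (⟨g x, hg1 x⟩, ⟨g x + x.1, hg2 x⟩)) ?_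
  intro a b h
  obtain ⟨h1, h2⟩ := Prod.ext_iff.mp h
  have hg : g a = g b := congrArg Subtype.val h1
  have h2' : g a + a.1 = g b + b.1 := congrArg Subtype.val h2
  rw [hg] at h2'
  exact Subtype.ext (add_left_cancel h2')

/-- sphere-covering bound for almost-all covers. For `0 ≤ ε < 1`,
`n ≥ 1` and any nonempty code `C ⊆ F_2^n` of size `K`, the `ε`-covering radius of `C` is
at least `n/2 − √((n/2) log(K/(1−ε)))`. -/
theorem sphere_covering_bound_almost_all
    (ε : ℝ) (hε0 : 0 ≤ ε) (hε1 : ε < 1) (n : ℕ) (hn : 1 ≤ n)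
    (C : Set (Fin n → ZMod 2)) (hC : C.Nonempty) (K : ℕ) (hK : K = Nat.card C) :
    (n : ℝ) / 2 - Real.sqrt ((n : ℝ) / 2 * Real.log ((K : ℝ) / (1 - ε)))
      ≤ epsCovRad n C ε := by
  classical
  have hn0 : (0 : ℝ) < n := by exact_mod_cast hn
  have hKpos : 0 < K := by
    rw [hK]
    have : Nonempty C := hC.to_subtype
    exact Nat.card_pos
  -- the defining set is nonempty
  have hne : ({r : ℝ | 0 ≤ r ∧ uncoveredFrac n C r ≤ ε}).Nonempty := by
    refine ⟨n, by positivity, ?_⟩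
    have hempty : IsEmpty {x : Fin n → ZMod 2 // ¬ ∃ c ∈ C, (hammingNorm (c + x) : ℝ) ≤ (n:ℝ)} := by
      refine ⟨fun x => x.2 ?_⟩
      obtain ⟨c, hc⟩ := hC
      refine ⟨c, hc, ?_⟩
      have := hammingNorm_le_card_fintype (x := c + x.1)
      simpa using (Nat.cast_le (α := ℝ)).2 this
    rw [uncoveredFrac, Nat.card_of_isEmpty]
    simpa using hε0
  refine le_csInf hne fun r hr => ?_
  obtain ⟨hr0, hrε⟩ := hr
  by_cases hhalf : (n : ℝ) / 2 ≤ r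
  · have := Real.sqrt_nonneg ((n : ℝ) / 2 * Real.log ((K : ℝ) / (1 - ε)))
    linarith
  push_neg at hhalf
  set t : ℝ := (n : ℝ) / 2 - r with hts
  have ht0 : 0 ≤ t := by simp [hts]; linarith
  -- counting
  set P : (Fin n → ZMod 2) → Prop := fun x => ∃ c ∈ C, (hammingNorm (c + x) : ℝ) ≤ r with hP
  have hcard_total : Fintype.card (Fin n → ZMod 2) = 2 ^ n := by simp
  have hcompl : Fintype.card {x // ¬ P x} = 2 ^ n - Fintype.card {x // P x} := by
    rw [Fintype.card_subtype_compl, hcard_total]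
  have hle_total : Fintype.card {x // P x} ≤ 2 ^ n := by
    rw [← hcard_total]; exact Fintype.card_subtype_le _
  -- covered count lower bound from uncoveredFrac ≤ ε
  have h2npos : (0:ℝ) < 2 ^ n := by positivity
  have hunc : (Fintype.card {x // ¬ P x} : ℝ) ≤ ε * 2 ^ n := by
    have := hrε
    rw [uncoveredFrac, div_le_iff₀ h2npos, Nat.card_eq_fintype_card] at this
    exact this
  have hcovered : (1 - ε) * 2 ^ n ≤ (Fintype.card {x // P x} : ℝ) := by
    have hcast : (Fintype.card {x // ¬ P x} : ℝ)
        = 2 ^ n - (Fintype.card {x // P x} : ℝ) := by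
      rw [hcompl]
      push_cast [Nat.cast_sub hle_total]
      ring
    rw [hcast] at hunc
    linarith
  -- upper bound on covered count
  have hup : (Fintype.card {x // P x} : ℝ)
      ≤ K * (2 ^ n * Real.exp (-2 * t ^ 2 / n)) := by
    have h1 := covered_card_le n C r
    have h2 := ball_card_le_hoeffding n hn t ht0
    have hr' : ∀ y : Fin n → ZMod 2,
        ((hammingNorm y : ℝ) ≤ r ↔ (hammingNorm y : ℝ) ≤ (n:ℝ)/2 - t) := by
      intro y; rw [hts]; constructor <;> intro h <;> linarith
    have hEq : Nat.card {y : Fin n → ZMod 2 // (hammingNorm y : ℝ) ≤ r}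
        = Nat.card {y : Fin n → ZMod 2 // (hammingNorm y : ℝ) ≤ (n:ℝ)/2 - t} := by
      congr 1
      exact congrArg _ (funext fun y => propext (hr' y))
    rw [← Nat.card_eq_fintype_card]
    calc (Nat.card {x // P x} : ℝ)
        ≤ (Nat.card C : ℝ) * (Nat.card {y : Fin n → ZMod 2 // (hammingNorm y : ℝ) ≤ r} : ℝ) := by
          exact_mod_cast h1
      _ = (K : ℝ) * (Nat.card {y : Fin n → ZMod 2 // (hammingNorm y : ℝ) ≤ (n:ℝ)/2 - t} : ℝ) := by
          rw [hK, hEq]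
      _ ≤ K * (2 ^ n * Real.exp (-2 * t ^ 2 / n)) := by
          gcongr
  -- combine
  have hkey : (1 - ε) ≤ K * Real.exp (-2 * t ^ 2 / n) := by
    have := le_trans hcovered hup
    calc (1 - ε) = (1 - ε) * 2 ^ n / 2 ^ n := by field_simp
      _ ≤ K * (2 ^ n * Real.exp (-2 * t ^ 2 / n)) / 2 ^ n := by gcongr
      _ = K * Real.exp (-2 * t ^ 2 / n) := by field_simp
  have hε' : (0:ℝ) < 1 - ε := by linarith
  have hexp : Real.exp (2 * t ^ 2 / n) ≤ (K : ℝ) / (1 - ε) := by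
    rw [le_div_iff₀ hε']
    have hmul := mul_le_mul_of_nonneg_right hkey (Real.exp_pos (2 * t ^ 2 / n)).le
    calc Real.exp (2 * t ^ 2 / n) * (1 - ε)
        = (1 - ε) * Real.exp (2 * t ^ 2 / n) := by ring
      _ ≤ K * Real.exp (-2 * t ^ 2 / n) * Real.exp (2 * t ^ 2 / n) := hmul
      _ = K := by rw [mul_assoc, ← Real.exp_add]; ring_nf; simp
  have hlog : 2 * t ^ 2 / n ≤ Real.log ((K : ℝ) / (1 - ε)) := by
    have := Real.log_le_log (Real.exp_pos _) hexp
    rwa [Real.log_exp] at this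
  have ht2 : t ^ 2 ≤ (n : ℝ) / 2 * Real.log ((K : ℝ) / (1 - ε)) := by
    rw [div_le_iff₀ hn0] at hlog
    nlinarith
  have : t ≤ Real.sqrt ((n : ℝ) / 2 * Real.log ((K : ℝ) / (1 - ε))) := by
    calc t = Real.sqrt (t ^ 2) := (Real.sqrt_sq ht0).symm
      _ ≤ _ := Real.sqrt_le_sqrt ht2
  linarith [this]
end
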